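/- Let b be a unimodular complex number and α a primitive third root of unity. If |1 − α + b| = 2 then b = ᾱ or b = −ᾱ. -/

import Mathlib

theorem stmt_11 (b α : ℂ) (hb : ‖b‖ = 1)
    (hα : α ^ 3 = 1) (hα1 : α ≠ 1)
    (h : ‖1 - α + b‖ = 2) :
    b = starRingEnd ℂ α ∨ b = -starRingEnd ℂ α := by
  -- |α| = 1
  have habs3 : ‖α‖ ^ 3 = 1 := by rw [← norm_pow, hα, norm_one]
  have habs : ‖α‖ = 1 := by
    nlinarith [norm_nonneg α, sq_nonneg (‖α‖ - 1),
      sq_nonneg (‖α‖ + 1)]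
  -- α² + α + 1 = 0
  have e3 : α ^ 2 + α + 1 = 0 := by
    have h0 : (α - 1) * (α ^ 2 + α + 1) = 0 := by linear_combination hα
    rcases mul_eq_zero.mp h0 with h1 | h1
    · exact absurd (sub_eq_zero.mp h1) hα1
    · exact h1
  -- conj α = α²
  have hc2 : α * starRingEnd ℂ α = 1 := by
    rw [Complex.mul_conj]
    rw [Complex.normSq_eq_norm_sq, habs]
    norm_num
  have hconj : starRingEnd ℂ α = α ^ 2 := by
    linear_combination α ^ 2 * hc2 - (starRingEnd ℂ α) * hα
  -- conj b
  have e2 : b * starRingEnd ℂ b = 1 := by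
    rw [Complex.mul_conj, Complex.normSq_eq_norm_sq, hb]
    norm_num
  set c := starRingEnd ℂ b with hcdef
  -- main equation
  have e1 : (1 - α + b) * (1 - α ^ 2 + c) = 4 := by
    have h1 : (1 - α + b) * starRingEnd ℂ (1 - α + b) = 4 := by
      rw [Complex.mul_conj, Complex.normSq_eq_norm_sq, h]
      norm_num
    calc (1 - α + b) * (1 - α ^ 2 + c)
        = (1 - α + b) * starRingEnd ℂ (1 - α + b) := by
          rw [map_add, map_sub, map_one, hconj]
      _ = 4 := h1
  -- key factorization
  have key : (2 + α) * ((b - α ^ 2) * (b + α ^ 2)) = 0 := by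
    linear_combination b * e1 - (1 - α + b) * e2 + (b + b ^ 2 - 1) * e3 +
      (-b - 2 * α - α ^ 2) * hα
  have hne : (2 + α) ≠ 0 := by
    intro hh
    have hα2 : α = -2 := by linear_combination hh
    rw [hα2] at habs
    norm_num at habs
  have key2 : (b - α ^ 2) * (b + α ^ 2) = 0 := by
    rcases mul_eq_zero.mp key with h1 | h1
    · exact absurd h1 hne
    · exact h1
  rw [hconj]
  rcases mul_eq_zero.mp key2 with h1 | h1
  · left; linear_combination h1
  · right; linear_combination h1
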